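/- The operator M^+ on the span of {e_m : m even} commutes with the action of Sp(g, F_2) given by sigma(e_m) = epsilon_m(sigma) e_{sigma{m}}. -/

import Mathlib

open Matrix BigOperators

/-- A characteristic: a vector in `F₂^{2g}`, indexed by `Fin g ⊕ Fin g`
(the first block is `a`, the second is `b`). -/
abbrev Char2 (g : ℕ) := (Fin g ⊕ Fin g) → ZMod 2

/-- The `a`-part of a characteristic. -/
def aPart {g : ℕ} (m : Char2 g) : Fin g → ZMod 2 := fun i => m (Sum.inl i)

/-- The `b`-part of a characteristic. -/
def bPart {g : ℕ} (m : Char2 g) : Fin g → ZMod 2 := fun i => m (Sum.inr i)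

/-- A characteristic `m = (a;b)` is even if `a'b = 0`. -/
def IsEvenChar {g : ℕ} (m : Char2 g) : Prop := aPart m ⬝ᵥ bPart m = 0

/-- A characteristic `m = (a;b)` is odd if `a'b = 1`. -/
def IsOddChar {g : ℕ} (m : Char2 g) : Prop := aPart m ⬝ᵥ bPart m = 1

instance {g : ℕ} : DecidablePred (IsEvenChar (g := g)) := fun m => by
  unfold IsEvenChar; infer_instance

instance {g : ℕ} : DecidablePred (IsOddChar (g := g)) := fun m => by
  unfold IsOddChar; infer_instance

/-- The type of `2g × 2g` matrices over `F₂`. -/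
abbrev SpMat (g : ℕ) := Matrix (Fin g ⊕ Fin g) (Fin g ⊕ Fin g) (ZMod 2)

/-- The offset `((CD')₀ ; (AB')₀)` appearing in the affine action. -/
def offVec {g : ℕ} (σ : SpMat g) : Char2 g :=
  Sum.elim (Matrix.diag (σ.toBlocks₂₁ * (σ.toBlocks₂₂)ᵀ))
           (Matrix.diag (σ.toBlocks₁₁ * (σ.toBlocks₁₂)ᵀ))

/-- The affine action `σ{m} = (σ')⁻¹ m + ((CD')₀ ; (AB')₀)`. -/
noncomputable def affAct {g : ℕ} (σ : SpMat g) (m : Char2 g) : Char2 g :=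
  (σᵀ)⁻¹ *ᵥ m + offVec σ

/-- The sign `(-1)^x` for `x : F₂`. -/
def sgn2 (x : ZMod 2) : ℤ := if x = 0 then 1 else -1

/-- The quadratic form `M[x] = x' M x`. -/
def quadF {g : ℕ} (M : Matrix (Fin g) (Fin g) (ZMod 2)) (x : Fin g → ZMod 2) : ZMod 2 :=
  x ⬝ᵥ (M *ᵥ x)

/-- `ε_m(σ) = (-1)^{tr(B'C) + (B'D)[a] + (A'C)[b]}`. -/
def epsChar {g : ℕ} (m : Char2 g) (σ : SpMat g) : ℤ :=
  sgn2 (Matrix.trace ((σ.toBlocks₁₂)ᵀ * σ.toBlocks₂₁)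
    + quadF ((σ.toBlocks₁₂)ᵀ * σ.toBlocks₂₂) (aPart m)
    + quadF ((σ.toBlocks₁₁)ᵀ * σ.toBlocks₂₁) (bPart m))

/-- The symplectic pairing `<m,n> = a'β + b'α`. -/
def pairing {g : ℕ} (m n : Char2 g) : ZMod 2 :=
  aPart m ⬝ᵥ bPart n + bPart m ⬝ᵥ aPart n

/-- `e(m,n) = (-1)^{<m,n>}`. -/
def eSign {g : ℕ} (m n : Char2 g) : ℤ := sgn2 (pairing m n)

/-- Fay's matrix `M⁺`, indexed by even characteristics: the image of the basis
vector `e_m` is `∑_{n even} e(m,n) e_n`. -/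
noncomputable def fayMplusMat (g : ℕ) :
    Matrix {m : Char2 g // IsEvenChar m} {m : Char2 g // IsEvenChar m} ℂ :=
  Matrix.of fun n m => ((eSign m.1 n.1 : ℤ) : ℂ)

/-- The matrix of the action of `σ` given by `σ(e_m) = ε_m(σ) e_{σ{m}}`. -/
noncomputable def actMat (g : ℕ) (σ : SpMat g) :
    Matrix {m : Char2 g // IsEvenChar m} {m : Char2 g // IsEvenChar m} ℂ :=
  Matrix.of fun n m => if affAct σ m.1 = n.1 then ((epsChar m.1 σ : ℤ) : ℂ) else 0

namespace FayAux

variable {g : ℕ}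

def J2 (g : ℕ) : SpMat g := Matrix.fromBlocks 0 1 1 0
def Pm (g : ℕ) : SpMat g := Matrix.fromBlocks 0 1 0 0

/-- `φ_σ(m) = (B'D)[a] + (A'C)[b]`, the non-constant part of the exponent of `ε`. -/
def phi (σ : SpMat g) (m : Char2 g) : ZMod 2 :=
  quadF ((σ.toBlocks₁₂)ᵀ * σ.toBlocks₂₂) (aPart m)
    + quadF ((σ.toBlocks₁₁)ᵀ * σ.toBlocks₂₁) (bPart m)

def Qf (m : Char2 g) : ZMod 2 := aPart m ⬝ᵥ bPart m

lemma zmod2_add_self' : ∀ x : ZMod 2, x + x = 0 := by decide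
lemma zmod2_add_self (x : ZMod 2) : x + x = 0 := zmod2_add_self' x

lemma sgn2_mul' : ∀ x y : ZMod 2, sgn2 x * sgn2 y = sgn2 (x + y) := by decide
lemma sgn2_mul (x y : ZMod 2) : sgn2 x * sgn2 y = sgn2 (x + y) := sgn2_mul' x y

lemma zmod2_ne0' : ∀ x : ZMod 2, x ≠ 0 → x = 1 := by decide
lemma zmod2_ne0 (x : ZMod 2) (h : x ≠ 0) : x = 1 := zmod2_ne0' x h

lemma J2_transpose : (J2 g)ᵀ = J2 g := by
  simp [J2, Matrix.fromBlocks_transpose]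

lemma J2_sq : J2 g * J2 g = 1 := by
  simp [J2, Matrix.fromBlocks_multiply, ← Matrix.fromBlocks_one]

lemma J2_cancel (X : SpMat g) : J2 g * (J2 g * X) = X := by
  rw [← Matrix.mul_assoc, J2_sq, Matrix.one_mul]

lemma Pm_add_transpose : Pm g + (Pm g)ᵀ = J2 g := by
  simp [Pm, J2, Matrix.fromBlocks_transpose, Matrix.fromBlocks_add]

lemma J_eq : Matrix.J (Fin g) (ZMod 2) = J2 g := by
  have h : (-1 : Matrix (Fin g) (Fin g) (ZMod 2)) = 1 := by
    ext i j
    simp only [Matrix.neg_apply, Matrix.one_apply]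
    split <;> decide
  simp [Matrix.J, J2, h]

lemma dot_shift {n m : Type*} [Fintype n] [Fintype m] (M : Matrix n m (ZMod 2))
    (x : m → ZMod 2) (y : n → ZMod 2) : (M *ᵥ x) ⬝ᵥ y = x ⬝ᵥ (Mᵀ *ᵥ y) := by
  rw [dotProduct_comm, dotProduct_mulVec, ← Matrix.mulVec_transpose, dotProduct_comm]

lemma sym_diag {n : Type*} [Fintype n] [DecidableEq n] (M : Matrix n n (ZMod 2)) (hM : Mᵀ = M)
    (u : n → ZMod 2) : u ⬝ᵥ (M *ᵥ u) = M.diag ⬝ᵥ u := by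
  classical
  have expand : u ⬝ᵥ (M *ᵥ u) = ∑ p : n × n, u p.1 * M p.1 p.2 * u p.2 := by
    rw [Fintype.sum_prod_type]
    simp [dotProduct, mulVec, Finset.mul_sum, mul_assoc]
  rw [expand, ← Finset.sum_filter_add_sum_filter_not Finset.univ (fun p : n × n => p.1 = p.2)]
  have h2 : ∑ p ∈ Finset.univ.filter (fun p : n × n => ¬ p.1 = p.2),
      u p.1 * M p.1 p.2 * u p.2 = 0 := by
    apply Finset.sum_involution (fun p _ => (p.2, p.1))
    · intro p hp
      have hsym : M p.2 p.1 = M p.1 p.2 := by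
        calc M p.2 p.1 = Mᵀ p.1 p.2 := rfl
        _ = M p.1 p.2 := by rw [hM]
      simp only [hsym]
      rw [show u p.2 * M p.1 p.2 * u p.1 = u p.1 * M p.1 p.2 * u p.2 by ring]
      exact zmod2_add_self _
    · intro p hp _
      simp only [Finset.mem_filter] at hp
      intro hcon
      exact hp.2 (congrArg Prod.snd hcon)
    · intro p hp
      simp only [Finset.mem_filter] at hp ⊢
      exact ⟨Finset.mem_univ _, fun h => hp.2 h.symm⟩
    · intro p hp; rfl
  rw [h2, add_zero, Finset.sum_filter, Fintype.sum_prod_type]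
  simp only [Matrix.diag, dotProduct]
  apply Finset.sum_congr rfl
  intro i _
  rw [Finset.sum_ite_eq Finset.univ i (fun j => u i * M i j * u j)]
  simp only [Finset.mem_univ, if_true]
  have hsq : ∀ x : ZMod 2, x * x = x := by decide
  rw [show u i * M i i * u i = M i i * (u i * u i) by ring, hsq]

lemma elim_ab (m : Char2 g) : Sum.elim (aPart m) (bPart m) = m := by
  funext x; cases x <;> rfl

lemma aPart_add (x y : Char2 g) : aPart (x + y) = aPart x + aPart y := rfl
lemma bPart_add (x y : Char2 g) : bPart (x + y) = bPart x + bPart y := rfl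
lemma aPart_elim (u v : Fin g → ZMod 2) : aPart (Sum.elim u v) = u := rfl
lemma bPart_elim (u v : Fin g → ZMod 2) : bPart (Sum.elim u v) = v := rfl

lemma J2_mulVec (m : Char2 g) : J2 g *ᵥ m = Sum.elim (bPart m) (aPart m) := by
  conv_lhs => rw [← elim_ab m]
  rw [J2, Matrix.fromBlocks_mulVec]
  simp

lemma Pm_mulVec (m : Char2 g) : Pm g *ᵥ m = Sum.elim (bPart m) 0 := by
  conv_lhs => rw [← elim_ab m]
  rw [Pm, Matrix.fromBlocks_mulVec]
  simp

lemma Qf_eq (m : Char2 g) : Qf m = m ⬝ᵥ (Pm g *ᵥ m) := by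
  rw [Pm_mulVec]
  have h : m ⬝ᵥ Sum.elim (bPart m) 0 = Sum.elim (aPart m) (bPart m) ⬝ᵥ Sum.elim (bPart m) 0 := by
    rw [elim_ab]
  rw [h, sumElim_dotProduct_sumElim]
  simp [Qf]

lemma pairing_eq (m n : Char2 g) : pairing m n = m ⬝ᵥ (J2 g *ᵥ n) := by
  rw [J2_mulVec]
  have h : m ⬝ᵥ Sum.elim (bPart n) (aPart n)
      = Sum.elim (aPart m) (bPart m) ⬝ᵥ Sum.elim (bPart n) (aPart n) := by
    rw [elim_ab]
  rw [h, sumElim_dotProduct_sumElim]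
  rfl

lemma pairing_add_left (x y z : Char2 g) :
    pairing (x + y) z = pairing x z + pairing y z := by
  unfold pairing
  rw [aPart_add, bPart_add, add_dotProduct, add_dotProduct]
  abel

lemma pairing_add_right (x y z : Char2 g) :
    pairing x (y + z) = pairing x y + pairing x z := by
  unfold pairing
  rw [aPart_add, bPart_add, dotProduct_add, dotProduct_add]
  abel

lemma pairing_self (x : Char2 g) : pairing x x = 0 := by
  unfold pairing
  rw [dotProduct_comm]
  exact zmod2_add_self _

lemma pairing_comm (x y : Char2 g) : pairing x y = pairing y x := by
  unfold pairing
  rw [dotProduct_comm, dotProduct_comm (bPart x)]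
  abel

lemma Qf_J2 (x : Char2 g) : Qf (J2 g *ᵥ x) = Qf x := by
  rw [J2_mulVec]
  unfold Qf
  rw [aPart_elim, bPart_elim, dotProduct_comm]

lemma Qadd (x y : Char2 g) : Qf (x + y) = Qf x + Qf y + pairing x y := by
  unfold Qf pairing
  rw [aPart_add, bPart_add, add_dotProduct, dotProduct_add, dotProduct_add,
    dotProduct_comm (bPart x) (aPart y)]
  abel

section Symplectic

variable {σ : SpMat g}

lemma hJ (hσ : σ ∈ Matrix.symplecticGroup (Fin g) (ZMod 2)) : σ * J2 g * σᵀ = J2 g := by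
  have h := SymplecticGroup.mem_iff.mp hσ
  rwa [J_eq] at h

lemma hJ' (hσ : σ ∈ Matrix.symplecticGroup (Fin g) (ZMod 2)) : σᵀ * J2 g * σ = J2 g := by
  have h := SymplecticGroup.mem_iff'.mp hσ
  rwa [J_eq] at h

lemma T_mul (hσ : σ ∈ Matrix.symplecticGroup (Fin g) (ZMod 2)) : (J2 g * σ * J2 g) * σᵀ = 1 := by
  have h : J2 g * σ * J2 g * σᵀ = J2 g * (σ * J2 g * σᵀ) := by
    simp only [Matrix.mul_assoc]
  rw [h, hJ hσ, J2_sq]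

lemma mul_T (hσ : σ ∈ Matrix.symplecticGroup (Fin g) (ZMod 2)) : σᵀ * (J2 g * σ * J2 g) = 1 := by
  have h : σᵀ * (J2 g * σ * J2 g) = (σᵀ * J2 g * σ) * J2 g := by
    simp only [Matrix.mul_assoc]
  rw [h, hJ' hσ, J2_sq]

lemma hS (hσ : σ ∈ Matrix.symplecticGroup (Fin g) (ZMod 2)) : (σᵀ)⁻¹ = J2 g * σ * J2 g := Matrix.inv_eq_left_inv (T_mul hσ)

lemma block_id (hσ : σ ∈ Matrix.symplecticGroup (Fin g) (ZMod 2)) : (σ.toBlocks₂₁)ᵀ * σ.toBlocks₁₂ + (σ.toBlocks₁₁)ᵀ * σ.toBlocks₂₂ = 1 := by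
  have h := hJ' hσ
  have hb : σ = Matrix.fromBlocks σ.toBlocks₁₁ σ.toBlocks₁₂ σ.toBlocks₂₁ σ.toBlocks₂₂ :=
    (Matrix.fromBlocks_toBlocks σ).symm
  rw [hb] at h
  rw [Matrix.fromBlocks_transpose] at h
  rw [show (J2 g) = Matrix.fromBlocks 0 1 1 0 from rfl] at h
  rw [Matrix.fromBlocks_multiply, Matrix.fromBlocks_multiply] at h
  have h12 := congrArg Matrix.toBlocks₁₂ h
  simp only [Matrix.toBlocks_fromBlocks₁₂, Matrix.mul_zero, Matrix.mul_one,
    Matrix.zero_mul, Matrix.one_mul, zero_add, add_zero] at h12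
  exact h12

lemma diag_elim {X Y Z W : Matrix (Fin g) (Fin g) (ZMod 2)} :
    (Matrix.fromBlocks X Y Z W).diag = Sum.elim X.diag W.diag := by
  funext i; cases i <;> rfl

lemma sigmaP : σ * Pm g * σᵀ =
    Matrix.fromBlocks (σ.toBlocks₁₁ * (σ.toBlocks₁₂)ᵀ) (σ.toBlocks₁₁ * (σ.toBlocks₂₂)ᵀ)
      (σ.toBlocks₂₁ * (σ.toBlocks₁₂)ᵀ) (σ.toBlocks₂₁ * (σ.toBlocks₂₂)ᵀ) := by
  conv_lhs => rw [← Matrix.fromBlocks_toBlocks σ]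
  rw [Matrix.fromBlocks_transpose]
  rw [show (Pm g) = Matrix.fromBlocks 0 1 0 0 from rfl]
  rw [Matrix.fromBlocks_multiply, Matrix.fromBlocks_multiply]
  simp

lemma diag_sigmaP : (σ * Pm g * σᵀ).diag = J2 g *ᵥ offVec σ := by
  rw [sigmaP, diag_elim, J2_mulVec]
  rfl

lemma master (hσ : σ ∈ Matrix.symplecticGroup (Fin g) (ZMod 2)) (u : Char2 g) :
    u ⬝ᵥ (J2 g *ᵥ offVec σ) = Qf u + Qf (σᵀ *ᵥ u) := by
  rw [Qf_eq, Qf_eq]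
  have h1 : (σᵀ *ᵥ u) ⬝ᵥ (Pm g *ᵥ (σᵀ *ᵥ u)) = u ⬝ᵥ ((σ * Pm g * σᵀ) *ᵥ u) := by
    rw [dot_shift, Matrix.transpose_transpose, Matrix.mulVec_mulVec, Matrix.mulVec_mulVec]
  rw [h1]
  have h2 : u ⬝ᵥ (Pm g *ᵥ u) + u ⬝ᵥ ((σ * Pm g * σᵀ) *ᵥ u)
      = u ⬝ᵥ ((Pm g + σ * Pm g * σᵀ) *ᵥ u) := by
    rw [Matrix.add_mulVec, dotProduct_add]
  rw [h2]
  set M := Pm g + σ * Pm g * σᵀ with hMdef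
  have hMsym : Mᵀ = M := by
    have key : Mᵀ = (Pm g)ᵀ + σ * (Pm g)ᵀ * σᵀ := by
      rw [hMdef, Matrix.transpose_add, Matrix.transpose_mul, Matrix.transpose_mul,
        Matrix.transpose_transpose, Matrix.mul_assoc]
    have hsum : M + Mᵀ = 0 := by
      rw [hMdef, key]
      have hre : Pm g + σ * Pm g * σᵀ + ((Pm g)ᵀ + σ * (Pm g)ᵀ * σᵀ) =
          (Pm g + (Pm g)ᵀ) + σ * (Pm g + (Pm g)ᵀ) * σᵀ := by
        noncomm_ring
      rw [hre, Pm_add_transpose, hJ hσ]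
      ext i j
      simp only [Matrix.add_apply, Matrix.zero_apply]
      exact zmod2_add_self _
    have hMM : M + M = 0 := by
      ext i j
      simp only [Matrix.add_apply, Matrix.zero_apply]
      exact zmod2_add_self _
    have h3 := hsum.trans hMM.symm
    exact add_left_cancel h3
  rw [sym_diag M hMsym]
  have hdiag : M.diag = J2 g *ᵥ offVec σ := by
    rw [hMdef, Matrix.diag_add, diag_sigmaP]
    have : (Pm g).diag = 0 := by funext i; cases i <;> rfl
    rw [this, zero_add]
  rw [hdiag, dotProduct_comm]

lemma phi_eq (hσ : σ ∈ Matrix.symplecticGroup (Fin g) (ZMod 2)) (w : Char2 g) : phi σ w = Qf (σ *ᵥ (J2 g *ᵥ w)) + Qf w := by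
  set A := σ.toBlocks₁₁; set B := σ.toBlocks₁₂; set C := σ.toBlocks₂₁; set D := σ.toBlocks₂₂
  set a := aPart w; set b := bPart w
  have hv : σ *ᵥ (J2 g *ᵥ w) = Sum.elim (A *ᵥ b + B *ᵥ a) (C *ᵥ b + D *ᵥ a) := by
    rw [J2_mulVec]
    conv_lhs => rw [← Matrix.fromBlocks_toBlocks σ]
    rw [Matrix.fromBlocks_mulVec]
    simp
    rfl
  rw [hv]
  unfold Qf phi
  rw [aPart_elim, bPart_elim]
  rw [add_dotProduct, dotProduct_add, dotProduct_add]
  unfold quadF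
  have e1 : (aPart w) ⬝ᵥ ((Bᵀ * D) *ᵥ (aPart w)) = (B *ᵥ a) ⬝ᵥ (D *ᵥ a) := by
    rw [dot_shift, Matrix.mulVec_mulVec]
  have e2 : (bPart w) ⬝ᵥ ((Aᵀ * C) *ᵥ (bPart w)) = (A *ᵥ b) ⬝ᵥ (C *ᵥ b) := by
    rw [dot_shift, Matrix.mulVec_mulVec]
  rw [e1, e2]
  have e3 : (A *ᵥ b) ⬝ᵥ (D *ᵥ a) + (B *ᵥ a) ⬝ᵥ (C *ᵥ b) = aPart w ⬝ᵥ bPart w := by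
    have f1 : (A *ᵥ b) ⬝ᵥ (D *ᵥ a) = b ⬝ᵥ ((Aᵀ * D) *ᵥ a) := by
      rw [dot_shift, Matrix.mulVec_mulVec]
    have f2 : (B *ᵥ a) ⬝ᵥ (C *ᵥ b) = b ⬝ᵥ ((Cᵀ * B) *ᵥ a) := by
      rw [dotProduct_comm, dot_shift, Matrix.mulVec_mulVec]
    rw [f1, f2, ← dotProduct_add, ← Matrix.add_mulVec, add_comm (Aᵀ * D) (Cᵀ * B)]
    have hbid : Cᵀ * B + Aᵀ * D = 1 := block_id hσ
    rw [hbid, Matrix.one_mulVec, dotProduct_comm]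
  calc (B *ᵥ a) ⬝ᵥ (D *ᵥ a) + (A *ᵥ b) ⬝ᵥ (C *ᵥ b)
      = ((A *ᵥ b) ⬝ᵥ (C *ᵥ b) + (A *ᵥ b) ⬝ᵥ (D *ᵥ a) + ((B *ᵥ a) ⬝ᵥ (C *ᵥ b)
          + (B *ᵥ a) ⬝ᵥ (D *ᵥ a))) + ((A *ᵥ b) ⬝ᵥ (D *ᵥ a) + (B *ᵥ a) ⬝ᵥ (C *ᵥ b)) := by
        generalize (A *ᵥ b) ⬝ᵥ (C *ᵥ b) = p
        generalize (A *ᵥ b) ⬝ᵥ (D *ᵥ a) = q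
        generalize (B *ᵥ a) ⬝ᵥ (C *ᵥ b) = r
        generalize (B *ᵥ a) ⬝ᵥ (D *ᵥ a) = s
        linear_combination - zmod2_add_self q - zmod2_add_self r
    _ = _ := by rw [e3]

lemma prTc (hσ : σ ∈ Matrix.symplecticGroup (Fin g) (ZMod 2)) (w : Char2 g) : pairing ((J2 g * σ * J2 g) *ᵥ w) (offVec σ) = phi σ w := by
  rw [pairing_eq, master hσ]
  have h1 : σᵀ *ᵥ ((J2 g * σ * J2 g) *ᵥ w) = w := by
    rw [Matrix.mulVec_mulVec, mul_T hσ, Matrix.one_mulVec]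
  have h2 : (J2 g * σ * J2 g) *ᵥ w = J2 g *ᵥ (σ *ᵥ (J2 g *ᵥ w)) := by
    rw [Matrix.mulVec_mulVec, Matrix.mulVec_mulVec]
  rw [h1, h2, Qf_J2, phi_eq hσ]

lemma pair_T (hσ : σ ∈ Matrix.symplecticGroup (Fin g) (ZMod 2)) (m k : Char2 g) :
    pairing ((J2 g * σ * J2 g) *ᵥ m) ((J2 g * σ * J2 g) *ᵥ k) = pairing m k := by
  rw [pairing_eq, pairing_eq, dot_shift, Matrix.mulVec_mulVec, Matrix.mulVec_mulVec]
  have hT : (J2 g * σ * J2 g)ᵀ * J2 g * (J2 g * σ * J2 g) = J2 g := by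
    rw [Matrix.transpose_mul, Matrix.transpose_mul, J2_transpose]
    simp only [Matrix.mul_assoc]
    rw [J2_cancel]
    have hm := mul_T hσ
    simp only [Matrix.mul_assoc] at hm
    rw [hm, Matrix.mul_one]
  rw [hT]

lemma offVec_add_self (σ : SpMat g) : offVec σ + offVec σ = 0 := by
  funext i; exact zmod2_add_self _

/-- The affine action as an equivalence. -/
noncomputable def affEquiv (σ : SpMat g) (hσ : σ ∈ Matrix.symplecticGroup (Fin g) (ZMod 2)) :
    Char2 g ≃ Char2 g where
  toFun := affAct σ
  invFun n := σᵀ *ᵥ (n + offVec σ)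
  left_inv m := by
    show σᵀ *ᵥ ((affAct σ m) + offVec σ) = m
    unfold affAct
    rw [hS hσ, add_assoc, offVec_add_self, add_zero, Matrix.mulVec_mulVec, mul_T hσ,
      Matrix.one_mulVec]
  right_inv n := by
    show affAct σ (σᵀ *ᵥ (n + offVec σ)) = n
    unfold affAct
    rw [hS hσ, Matrix.mulVec_mulVec, T_mul hσ, Matrix.one_mulVec, add_assoc,
      offVec_add_self, add_zero]

lemma key2 (hσ : σ ∈ Matrix.symplecticGroup (Fin g) (ZMod 2)) (m k : Char2 g) :
    pairing (affAct σ m) (affAct σ k) + phi σ m = phi σ k + pairing m k := by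
  unfold affAct
  rw [hS hσ, pairing_add_left, pairing_add_right, pairing_add_right,
    pair_T hσ, prTc hσ, pairing_self, pairing_comm (offVec σ), prTc hσ]
  generalize pairing m k = p
  generalize phi σ m = x
  generalize phi σ k = y
  linear_combination zmod2_add_self x

lemma Qf_aff (hσ : σ ∈ Matrix.symplecticGroup (Fin g) (ZMod 2)) (m : Char2 g) :
    Qf (affAct σ m) = Qf m + Qf (offVec σ) := by
  unfold affAct
  rw [hS hσ, Qadd, prTc hσ]
  have h2 : (J2 g * σ * J2 g) *ᵥ m = J2 g *ᵥ (σ *ᵥ (J2 g *ᵥ m)) := by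
    rw [Matrix.mulVec_mulVec, Matrix.mulVec_mulVec]
  rw [h2, Qf_J2, phi_eq hσ]
  generalize Qf (σ *ᵥ J2 g *ᵥ m) = y
  generalize Qf m = q
  generalize Qf (offVec σ) = c
  linear_combination zmod2_add_self y

lemma sum_sgn : ∑ m : Char2 g, sgn2 (Qf m) = 2 ^ g := by
  classical
  have he := Equiv.sum_comp (Equiv.sumArrowEquivProdArrow (Fin g) (Fin g) (ZMod 2)).symm
    (fun m : Char2 g => sgn2 (Qf m))
  rw [← he, Fintype.sum_prod_type]
  have inner : ∀ u : Fin g → ZMod 2,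
      (∑ v : Fin g → ZMod 2, sgn2 (Qf ((Equiv.sumArrowEquivProdArrow
        (Fin g) (Fin g) (ZMod 2)).symm (u, v))))
      = if u = 0 then (2 : ℤ) ^ g else 0 := by
    intro u
    have hq : ∀ v, Qf ((Equiv.sumArrowEquivProdArrow (Fin g) (Fin g) (ZMod 2)).symm (u, v))
        = u ⬝ᵥ v := fun v => rfl
    simp only [hq]
    by_cases hu : u = 0
    · subst hu
      simp only [zero_dotProduct, if_true]
      rw [Finset.sum_const]
      simp [sgn2, Fintype.card_fun]
    · rw [if_neg hu]
      obtain ⟨i, hi⟩ : ∃ i, u i ≠ 0 := by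
        by_contra hc
        push_neg at hc
        exact hu (funext hc)
      have hui : u i = 1 := zmod2_ne0 _ hi
      apply Finset.sum_ninvolution (g := fun v => v + Pi.single i 1)
      · intro v
        have hdot : u ⬝ᵥ (v + Pi.single i 1) = u ⬝ᵥ v + 1 := by
          rw [dotProduct_add, dotProduct_single, hui, one_mul]
        rw [hdot]
        have : ∀ t : ZMod 2, sgn2 t + sgn2 (t + 1) = 0 := by decide
        exact this _
      · intro v _
        intro hcon
        have := congrFun hcon i
        simp only [Pi.add_apply, Pi.single_eq_same] at this
        have h1 : (1 : ZMod 2) = 0 := by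
          apply add_left_cancel (a := v i)
          rw [add_zero]
          exact this
        exact one_ne_zero h1
      · intro v; exact Finset.mem_univ _
      · intro v
        funext j
        simp only [Pi.add_apply]
        rw [add_assoc, zmod2_add_self, add_zero]
  rw [Finset.sum_congr rfl (fun u _ => inner u)]
  rw [Finset.sum_ite_eq' Finset.univ (0 : Fin g → ZMod 2) (fun _ => (2 : ℤ) ^ g)]
  simp

lemma Qc (hσ : σ ∈ Matrix.symplecticGroup (Fin g) (ZMod 2)) : Qf (offVec σ) = 0 := by
  by_contra hne
  have h1 : Qf (offVec σ) = 1 := zmod2_ne0 _ hne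
  have hre : ∑ m : Char2 g, sgn2 (Qf m) = ∑ m : Char2 g, sgn2 (Qf (affAct σ m)) :=
    (Equiv.sum_comp (affEquiv σ hσ) (fun m : Char2 g => sgn2 (Qf m))).symm
  have hneg : ∀ m : Char2 g, sgn2 (Qf (affAct σ m)) = - sgn2 (Qf m) := by
    intro m
    rw [Qf_aff hσ, h1]
    have : ∀ t : ZMod 2, sgn2 (t + 1) = - sgn2 t := by decide
    exact this _
  rw [Finset.sum_congr rfl (fun m _ => hneg m), Finset.sum_neg_distrib, sum_sgn] at hre
  have h2 : (0 : ℤ) < 2 ^ g := by positivity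
  linarith

lemma isEven_iff (m : Char2 g) : IsEvenChar m ↔ Qf m = 0 := Iff.rfl

lemma even_affAct (hσ : σ ∈ Matrix.symplecticGroup (Fin g) (ZMod 2)) {m : Char2 g}
    (hm : IsEvenChar m) : IsEvenChar (affAct σ m) := by
  rw [isEven_iff] at hm ⊢
  rw [Qf_aff hσ, hm, Qc hσ, add_zero]

lemma even_inv (hσ : σ ∈ Matrix.symplecticGroup (Fin g) (ZMod 2)) {n : Char2 g}
    (hn : IsEvenChar n) : IsEvenChar (σᵀ *ᵥ (n + offVec σ)) := by
  rw [isEven_iff] at hn ⊢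
  have h := Qf_aff hσ (σᵀ *ᵥ (n + offVec σ))
  have h2 : affAct σ (σᵀ *ᵥ (n + offVec σ)) = n := (affEquiv σ hσ).right_inv n
  rw [h2, hn, Qc hσ, add_zero] at h
  exact h.symm

end Symplectic

end FayAux


/-- the operator `M⁺` commutes with the action of `Sp(g,F₂)`
given by `σ(e_m) = ε_m(σ) e_{σ{m}}`. -/
theorem fay_Mplus_commutes (g : ℕ) (σ : SpMat g)
    (hσ : σ ∈ Matrix.symplecticGroup (Fin g) (ZMod 2)) :
    fayMplusMat g * actMat g σ = actMat g σ * fayMplusMat g := by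
  classical
  ext n m
  rw [Matrix.mul_apply, Matrix.mul_apply]
  simp only [fayMplusMat, actMat, Matrix.of_apply]
  have hme : IsEvenChar (affAct σ m.1) := FayAux.even_affAct hσ m.2
  have hke : IsEvenChar (σᵀ *ᵥ (n.1 + offVec σ)) := FayAux.even_inv hσ n.2
  have hL : ∀ k : {m : Char2 g // IsEvenChar m},
      (affAct σ m.1 = k.1) = ((⟨affAct σ m.1, hme⟩ : {m : Char2 g // IsEvenChar m}) = k) := by
    intro k
    apply propext
    constructor
    · intro h; exact Subtype.ext h
    · intro h; rw [← h]
  have hR : ∀ k : {m : Char2 g // IsEvenChar m},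
      (affAct σ k.1 = n.1)
      = ((⟨σᵀ *ᵥ (n.1 + offVec σ), hke⟩ : {m : Char2 g // IsEvenChar m}) = k) := by
    intro k
    apply propext
    constructor
    · intro h
      apply Subtype.ext
      have hli : σᵀ *ᵥ (affAct σ k.1 + offVec σ) = k.1 := (FayAux.affEquiv σ hσ).left_inv k.1
      rw [h] at hli
      exact hli
    · intro h
      rw [← h]
      exact (FayAux.affEquiv σ hσ).right_inv n.1
  have hLsum : (∑ k : {m : Char2 g // IsEvenChar m},
      ((eSign k.1 n.1 : ℤ) : ℂ) * (if affAct σ m.1 = k.1 then ((epsChar m.1 σ : ℤ) : ℂ) else 0))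
      = ((eSign (affAct σ m.1) n.1 : ℤ) : ℂ) * ((epsChar m.1 σ : ℤ) : ℂ) := by
    have step : ∀ k ∈ Finset.univ, ((eSign k.1 n.1 : ℤ) : ℂ)
        * (if affAct σ m.1 = k.1 then ((epsChar m.1 σ : ℤ) : ℂ) else 0)
        = if (⟨affAct σ m.1, hme⟩ : {m : Char2 g // IsEvenChar m}) = k
            then ((eSign k.1 n.1 : ℤ) : ℂ) * ((epsChar m.1 σ : ℤ) : ℂ) else 0 := by
      intro k _
      simp only [hL k, mul_ite, mul_zero]
    rw [Finset.sum_congr rfl step, Finset.sum_ite_eq]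
    simp
  have hRsum : (∑ k : {m : Char2 g // IsEvenChar m},
      (if affAct σ k.1 = n.1 then ((epsChar k.1 σ : ℤ) : ℂ) else 0) * ((eSign m.1 k.1 : ℤ) : ℂ))
      = ((epsChar (σᵀ *ᵥ (n.1 + offVec σ)) σ : ℤ) : ℂ)
        * ((eSign m.1 (σᵀ *ᵥ (n.1 + offVec σ)) : ℤ) : ℂ) := by
    have step : ∀ k ∈ Finset.univ,
        (if affAct σ k.1 = n.1 then ((epsChar k.1 σ : ℤ) : ℂ) else 0) * ((eSign m.1 k.1 : ℤ) : ℂ)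
        = if (⟨σᵀ *ᵥ (n.1 + offVec σ), hke⟩ : {m : Char2 g // IsEvenChar m}) = k
            then ((epsChar k.1 σ : ℤ) : ℂ) * ((eSign m.1 k.1 : ℤ) : ℂ) else 0 := by
      intro k _
      simp only [hR k, ite_mul, zero_mul]
    rw [Finset.sum_congr rfl step, Finset.sum_ite_eq]
    simp
  rw [hLsum, hRsum]
  have hn : n.1 = affAct σ (σᵀ *ᵥ (n.1 + offVec σ)) :=
    ((FayAux.affEquiv σ hσ).right_inv n.1).symm
  have key : (eSign (affAct σ m.1) (affAct σ (σᵀ *ᵥ (n.1 + offVec σ))) * epsChar m.1 σ : ℤ)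
      = epsChar (σᵀ *ᵥ (n.1 + offVec σ)) σ * eSign m.1 (σᵀ *ᵥ (n.1 + offVec σ)) := by
    unfold eSign epsChar
    rw [FayAux.sgn2_mul, FayAux.sgn2_mul]
    congr 1
    have h := FayAux.key2 hσ m.1 (σᵀ *ᵥ (n.1 + offVec σ))
    unfold FayAux.phi at h
    linear_combination h
  calc ((eSign (affAct σ m.1) n.1 : ℤ) : ℂ) * ((epsChar m.1 σ : ℤ) : ℂ)
      = ((eSign (affAct σ m.1) (affAct σ (σᵀ *ᵥ (n.1 + offVec σ))) * epsChar m.1 σ : ℤ) : ℂ) := by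
        rw [← hn]; push_cast; ring
    _ = ((epsChar (σᵀ *ᵥ (n.1 + offVec σ)) σ * eSign m.1 (σᵀ *ᵥ (n.1 + offVec σ)) : ℤ) : ℂ) := by
        rw [key]
    _ = _ := by push_cast; ring
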